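/- arXiv:2402.12275 — 3 statements merged into one kernel-verified Lean document; each statement's English description precedes it below -/
import Mathlib

section
/- If a dataset D is mutually independent with respect to a model space M (i.e., for each data point d in D there exists a model in M consistent with all of D except d), then the size of D is at most the cardinality of M. -/
/-- A finite dataset `D` is mutually independent w.r.t. a finite model space `M`:
for each point `d ∈ D` there is a model failing on `d` but satisfying all other points. -/
theorem stmt_0 {M X : Type*} [Fintype M] (sat : M → X → Prop) (D : Finset X)
    (hMI : ∀ d ∈ D, ∃ m : M, ¬ sat m d ∧ ∀ d' ∈ D, d' ≠ d → sat m d') :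
    D.card ≤ Fintype.card M := by
  classical
  choose f hf1 hf2 using hMI
  have hinj : Function.Injective (fun d : {x // x ∈ D} => f d.1 d.2) := by
    intro d d' h
    by_contra hne
    have hne' : d.1 ≠ d'.1 := fun he => hne (Subtype.ext he)
    have hsat : sat (f d'.1 d'.2) d.1 := hf2 d'.1 d'.2 d.1 d.2 hne'
    have h' : f d.1 d.2 = f d'.1 d'.2 := h
    rw [← h'] at hsat
    exact hf1 d.1 d.2 hsat
  calc D.card = Fintype.card {x // x ∈ D} := (Fintype.card_coe D).symm
    _ ≤ Fintype.card M := Fintype.card_le_of_injective _ hinj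
end

section
/- Every finite dataset D has a mutually independent subset D' ⊆ D such that a model in M satisfies all of D if and only if it satisfies all of D' (i.e., D and D' impose the same constraints on M). -/
/-- Lemma α: every finite dataset `D` has a mutually independent subset `D' ⊆ D`
imposing exactly the same constraints on the model space. -/
theorem stmt_9 {M X : Type*} (sat : M → X → Prop) (D : Finset X) :
    ∃ D' : Finset X, D' ⊆ D ∧
      (∀ d ∈ D', ∃ m : M, ¬ sat m d ∧ ∀ d' ∈ D', d' ≠ d → sat m d') ∧
      (∀ m : M, (∀ d ∈ D, sat m d) ↔ (∀ d ∈ D', sat m d)) := by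
  classical
  -- collection of subsets of D imposing the same constraints
  set S : Finset (Finset X) :=
    D.powerset.filter (fun E => ∀ m : M, (∀ d ∈ D, sat m d) ↔ (∀ d ∈ E, sat m d)) with hS
  have hDS : D ∈ S := by
    simp [hS]
  obtain ⟨D', hD'S, hmin⟩ := S.exists_min_image Finset.card ⟨D, hDS⟩
  simp only [hS, Finset.mem_filter, Finset.mem_powerset] at hD'S
  obtain ⟨hsub, hiff⟩ := hD'S
  refine ⟨D', hsub, ?_, hiff⟩
  intro d hd
  -- erase d is strictly smaller, hence not in S
  have herase : (D'.erase d) ∉ S := by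
    intro hmem
    have := hmin _ hmem
    have hlt : (D'.erase d).card < D'.card := Finset.card_erase_lt_of_mem hd
    omega
  simp only [hS, Finset.mem_filter, Finset.mem_powerset, not_and] at herase
  have hsub' : D'.erase d ⊆ D := (Finset.erase_subset d D').trans hsub
  push_neg at herase
  obtain ⟨m, hm⟩ := herase hsub'
  -- forward direction of the iff always holds, so m must satisfy erase but not D
  have hfwd : (∀ e ∈ D, sat m e) → ∀ e ∈ D'.erase d, sat m e := fun h e he =>
    ((hiff m).mp h) e (Finset.mem_of_mem_erase he)
  obtain ⟨⟨hall, e, he, hne⟩⟩ | ⟨hnD0, hsatE⟩ := hm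
  · exact absurd (hfwd hall e he) hne
  have hnD : ¬ ∀ e ∈ D, sat m e := by
    obtain ⟨e, he, hne⟩ := hnD0
    exact fun h => hne (h e he)
  have hnD' : ¬ ∀ e ∈ D', sat m e := fun h => hnD ((hiff m).mpr h)
  push_neg at hnD'
  obtain ⟨d', hd', hnsat⟩ := hnD'
  have : d' = d := by
    by_contra hne
    exact hnsat (hsatE d' (Finset.mem_erase.mpr ⟨hne, hd'⟩))
  subst this
  exact ⟨m, hnsat, fun e he hne => hsatE e (Finset.mem_erase.mpr ⟨hne, he⟩)⟩
end

section
/- A mutually independent set D w.r.t. M with |D| = |M| forces a bijection: the witness map d ↦ m(d) (where m(d) fails on d and satisfies D \ {d}) is a bijection from D onto M, and every model in M fails on exactly one point of D. -/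
/-- If `D` is mutually independent w.r.t. `M` with `|D| = |M|` and `w` assigns to each
`d ∈ D` a witness model failing on `d` and satisfying `D \ {d}`, then `w` is a
bijection from `D` onto `M`, and every model in `M` fails on exactly one point of `D`. -/
theorem stmt_19 {M X : Type*} [Fintype M] (sat : M → X → Prop) (D : Finset X)
    (hcard : D.card = Fintype.card M) (w : X → M)
    (hw : ∀ d ∈ D, ¬ sat (w d) d ∧ ∀ d' ∈ D, d' ≠ d → sat (w d) d') :
    Set.BijOn w ↑D Set.univ ∧ ∀ m : M, ∃! d : X, d ∈ D ∧ ¬ sat m d := by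
  classical
  have hinj : Set.InjOn w ↑D := by
    intro a ha b hb hab
    by_contra hne
    have h1 := (hw a ha).1
    have h2 := (hw b hb).2 a ha hne
    rw [← hab] at h2
    exact h1 h2
  have himg : D.image w = Finset.univ :=
    Finset.eq_univ_of_card _ (by rw [Finset.card_image_of_injOn hinj, hcard])
  have hsurj : Set.SurjOn w ↑D Set.univ := by
    intro m _
    have hm : m ∈ D.image w := by rw [himg]; exact Finset.mem_univ m
    obtain ⟨d, hd, hdm⟩ := Finset.mem_image.mp hm
    exact ⟨d, hd, hdm⟩
  refine ⟨⟨fun x _ => Set.mem_univ _, hinj, hsurj⟩, ?_⟩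
  intro m
  obtain ⟨d, hd, hdm⟩ := hsurj (Set.mem_univ m)
  have hd' : d ∈ D := hd
  refine ⟨d, ⟨hd', hdm ▸ (hw d hd').1⟩, ?_⟩
  rintro e ⟨he, hns⟩
  by_contra hne
  exact hns (hdm ▸ (hw d hd').2 e he hne)
end
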